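/- Let X be an integer-valued random variable that is symmetric (there exists a ∈ ℝ, necessarily in (1/2)ℤ, with P(X = a + x) = P(X = a − x) for all x ∈ ℝ) and log-concave. Then Δ_∞(X) ≥ 2·Var(X). -/

import Mathlib

open MeasureTheory ProbabilityTheory Real Finset

section CoreSeq

variable {u : ℕ → ℝ} {M q : ℝ}

private lemma partial_tail (hsum : Summable u) (hpos : ∀ j, 0 ≤ u j)
    (hq1 : q < 1) (htot : ∑' j, u j = M / (1 - q))
    (j : ℕ) (hlow : ∀ i, i < j → M * q ^ i ≤ u i) :
    (∑' i, u (i + j)) ≤ M * q ^ j / (1 - q) := by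
  have h := Summable.sum_add_tsum_nat_add j hsum
  have hq' : q ≠ 1 := ne_of_lt hq1
  have hgeo : ∑ i ∈ range j, M * q ^ i ≤ ∑ i ∈ range j, u i :=
    Finset.sum_le_sum fun i hi => hlow i (Finset.mem_range.1 hi)
  have hgs : ∑ i ∈ range j, M * q ^ i = M * ((q ^ j - 1) / (q - 1)) := by
    rw [← Finset.mul_sum, geom_sum_eq hq']
  have h1q : (0:ℝ) < 1 - q := by linarith
  have hne : q - 1 ≠ 0 := sub_ne_zero_of_ne hq'
  have hE : M * ((q ^ j - 1) / (q - 1)) + M * q ^ j / (1-q) = M / (1-q) := by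
    field_simp
    ring
  linarith [hgs, hgeo, h, htot, hE]

private lemma tail_le (hM : 0 < M) (hq0 : 0 ≤ q) (hq1 : q < 1)
    (hpos : ∀ j, 0 ≤ u j) (hu0 : u 0 = M) (hsum : Summable u)
    (htot : ∑' j, u j = M / (1 - q))
    (hlc : ∀ j, u (j+2) * u j ≤ u (j+1)^2)
    (hz : ∀ j, u j = 0 → u (j+1) = 0) :
    ∀ j, (∑' i, u (i + j)) ≤ M * q ^ j / (1 - q) := by
  have h1q : (0:ℝ) < 1 - q := by linarith
  by_cases hA : ∀ i, M * q ^ i ≤ u i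
  · exact fun j => partial_tail hsum hpos hq1 htot j (fun i _ => hA i)
  · push_neg at hA
    have hk := Nat.find_spec hA
    set k := Nat.find hA with hkdef
    have hmin : ∀ i, i < k → M * q ^ i ≤ u i := by
      intro i hi
      rw [hkdef] at hi
      exact not_lt.1 (Nat.find_min hA hi)
    clear_value k
    have hk0 : k ≠ 0 := by
      intro h
      rw [h] at hk
      simp [hu0] at hk
    have hqpos : 0 < q := by
      rcases hq0.lt_or_eq with h | h
      · exact h
      · exfalso
        have : M * q ^ k = 0 := by
          rw [← h, zero_pow hk0, mul_zero]
        linarith [hpos k, hk, this]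
    -- step : u (k+i+1) ≤ q * u (k+i)
    have step : ∀ i, u (k + i + 1) ≤ q * u (k + i) := by
      intro i
      induction i with
      | zero =>
        simp only [Nat.add_zero]
        by_cases h0 : u k = 0
        · rw [hz k h0, h0, mul_zero]
        · have hukpos : 0 < u k := lt_of_le_of_ne (hpos k) (Ne.symm h0)
          obtain ⟨k', rfl⟩ := Nat.exists_eq_succ_of_ne_zero hk0
          have hlow : M * q ^ k' ≤ u k' := hmin k' (Nat.lt_succ_self k')
          have hlc' := hlc k'
          have hqk : (0:ℝ) < M * q ^ k' := by positivity
          have hup : 0 < u k' := lt_of_lt_of_le hqk hlow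
          -- u(k'+2) * u k' ≤ u(k'+1)^2 ≤ u(k'+1) * (M q^(k'+1)) = q * u(k'+1) * M q^k'
          --   ≤ q * u(k'+1) * u k'
          have h1 : u (k'+1) ^ 2 ≤ u (k'+1) * (M * q ^ (k'+1)) := by
            rw [pow_two]
            exact mul_le_mul_of_nonneg_left hk.le (hpos _)
          have h2 : u (k'+1) * (M * q ^ (k'+1)) = q * u (k'+1) * (M * q ^ k') := by
            ring
          have h3 : q * u (k'+1) * (M * q ^ k') ≤ q * u (k'+1) * u k' := by
            apply mul_le_mul_of_nonneg_left hlow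
            positivity
          have h4 : u (k'+2) * u k' ≤ q * u (k'+1) * u k' := by
            linarith
          have := (mul_le_mul_iff_left₀ hup).1 h4
          simpa [Nat.succ_eq_add_one] using this
      | succ i ih =>
        by_cases h0 : u (k + i + 1) = 0
        · have := hz _ h0
          rw [show k + (i+1) + 1 = (k + i + 1) + 1 by ring, this,
            show k + (i+1) = k + i + 1 by ring, h0, mul_zero]
        · have hpos1 : 0 < u (k + i + 1) := lt_of_le_of_ne (hpos _) (Ne.symm h0)
          have hposk : 0 < u (k + i) := by
            by_contra h
            have : u (k + i) = 0 := le_antisymm (not_lt.1 h) (hpos _)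
            rw [this, mul_zero] at ih
            linarith
          have hlc' := hlc (k + i)
          have h4 : u (k + i + 2) * u (k + i) ≤ q * u (k + i + 1) * u (k + i) := by
            nlinarith
          have := (mul_le_mul_iff_left₀ hposk).1 h4
          rw [show k + (i+1) + 1 = k + i + 2 by ring, show k + (i+1) = k + i + 1 by ring]
          exact this
    have geom : ∀ i, u (k + i) ≤ u k * q ^ i := by
      intro i
      induction i with
      | zero => simp
      | succ i ih =>
        have := step i
        calc u (k + (i+1)) = u (k + i + 1) := rfl
          _ ≤ q * u (k + i) := step i
          _ ≤ q * (u k * q ^ i) := by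
              apply mul_le_mul_of_nonneg_left ih (le_of_lt hqpos)
          _ = u k * q ^ (i+1) := by ring
    intro j
    rcases le_or_gt j k with hjk | hjk
    · exact partial_tail hsum hpos hq1 htot j (fun i hi => hmin i (lt_of_lt_of_le hi hjk))
    · -- j > k : pointwise geometric bound
      have hpt : ∀ i, u (i + j) ≤ M * q ^ (i + j) := by
        intro i
        have : i + j = k + (i + j - k) := by omega
        rw [this]
        calc u (k + (i + j - k)) ≤ u k * q ^ (i + j - k) := geom _
          _ ≤ (M * q ^ k) * q ^ (i + j - k) := by
              apply mul_le_mul_of_nonneg_right (le_of_lt hk) (by positivity)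
          _ = M * q ^ (k + (i + j - k)) := by rw [pow_add]; ring
      have hsum1 : Summable (fun i => u (i + j)) := (summable_nat_add_iff j).2 hsum
      have hfeq : (fun i : ℕ => M * q ^ (i + j)) = fun i : ℕ => (M * q ^ j) * q ^ i := by
        funext i
        rw [pow_add]
        ring
      have hsum2 : Summable (fun i : ℕ => M * q ^ (i + j)) := by
        rw [hfeq]
        exact (summable_geometric_of_lt_one hq0 hq1).mul_left _
      calc (∑' i, u (i + j)) ≤ ∑' i, M * q ^ (i + j) := hsum1.tsum_le_tsum hpt hsum2
        _ = M * q ^ j * (1-q)⁻¹ := by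
            rw [hfeq, tsum_mul_left, tsum_geometric_of_lt_one hq0 hq1]
        _ = M * q ^ j / (1-q) := by ring

-- Abel-type comparison
private lemma abel_identity (u : ℕ → ℝ) (w : ℕ → ℝ) (hw0 : w 0 = 0) :
    ∀ N, ∑ j ∈ range (N+1), w j * u j
      = ∑ i ∈ range N, (w (i+1) - w i) * (∑ j ∈ Finset.Ico (i+1) (N+1), u j) := by
  intro N
  induction N with
  | zero => simp [hw0]
  | succ N ih =>
    rw [Finset.sum_range_succ, ih, Finset.sum_range_succ]
    have h1 : ∑ i ∈ range N, (w (i+1) - w i) * (∑ j ∈ Finset.Ico (i+1) (N+2), u j)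
        = ∑ i ∈ range N, ((w (i+1) - w i) * (∑ j ∈ Finset.Ico (i+1) (N+1), u j)
            + (w (i+1) - w i) * u (N+1)) := by
      apply Finset.sum_congr rfl
      intro i hi
      have hi' : i < N := Finset.mem_range.1 hi
      have : ∑ j ∈ Finset.Ico (i+1) (N+2), u j
          = ∑ j ∈ Finset.Ico (i+1) (N+1), u j + u (N+1) := by
        rw [show N + 2 = (N+1) + 1 by ring, Finset.sum_Ico_succ_top (by omega)]
      rw [this]; ring
    have h2 : ∑ j ∈ Finset.Ico (N+1) (N+2), u j = u (N+1) := by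
      rw [show N + 2 = (N+1) + 1 by ring, Finset.sum_Ico_succ_top (le_refl _),
        Finset.Ico_self, Finset.sum_empty, zero_add]
    rw [h1, h2, Finset.sum_add_distrib, ← Finset.sum_mul, Finset.sum_range_sub w N]
    rw [hw0]
    ring

private lemma weighted_bound {B : ℕ → ℝ} {w : ℕ → ℝ}
    (hsum : Summable u) (hpos : ∀ j, 0 ≤ u j)
    (hw0 : w 0 = 0) (hwm : ∀ j, w j ≤ w (j+1))
    (hT : ∀ j, (∑' i, u (i + j)) ≤ B j) (hBpos : ∀ j, 0 ≤ B j)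
    (hBsum : Summable (fun i => (w (i+1) - w i) * B (i+1))) :
    ∑' j, w j * u j ≤ ∑' i, (w (i+1) - w i) * B (i+1) := by
  have hwpos : ∀ j, 0 ≤ w j := by
    intro j
    induction j with
    | zero => rw [hw0]
    | succ j ih => exact le_trans ih (hwm j)
  apply Real.tsum_le_of_sum_range_le (fun j => mul_nonneg (hwpos j) (hpos j))
  intro N
  have key : ∀ N, ∑ j ∈ range N, w j * u j ≤ ∑' i, (w (i+1) - w i) * B (i+1) := by
    intro N
    cases N with
    | zero =>
      simp only [Finset.range_zero, Finset.sum_empty]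
      apply tsum_nonneg
      intro i
      exact mul_nonneg (by linarith [hwm i]) (hBpos _)
    | succ N =>
      rw [abel_identity u w hw0 N]
      have hstep : ∀ i, i ∈ range N →
          (w (i+1) - w i) * (∑ j ∈ Finset.Ico (i+1) (N+1), u j)
            ≤ (w (i+1) - w i) * B (i+1) := by
        intro i _
        apply mul_le_mul_of_nonneg_left _ (by linarith [hwm i])
        have heq : ∑ j ∈ Finset.Ico (i+1) (N+1), u j
            = ∑ l ∈ range (N + 1 - (i+1)), u (l + (i+1)) := by
          rw [Finset.sum_Ico_eq_sum_range]
          apply Finset.sum_congr rfl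
          intro l _
          congr 1
          ring
        rw [heq]
        calc ∑ l ∈ range (N + 1 - (i+1)), u (l + (i+1))
            ≤ ∑' l, u (l + (i+1)) := by
              apply ((summable_nat_add_iff (i+1)).2 hsum).sum_le_tsum _ (fun l _ => hpos _)
          _ ≤ B (i+1) := hT (i+1)
      calc ∑ i ∈ range N, (w (i+1) - w i) * (∑ j ∈ Finset.Ico (i+1) (N+1), u j)
          ≤ ∑ i ∈ range N, (w (i+1) - w i) * B (i+1) := Finset.sum_le_sum hstep
        _ ≤ ∑' i, (w (i+1) - w i) * B (i+1) := by
            apply hBsum.sum_le_tsum _ (fun i _ => mul_nonneg (by linarith [hwm i]) (hBpos _))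
  exact key N

end CoreSeq

section SeqMain

private lemma seq_main (u : ℕ → ℝ) (M q : ℝ) (hM : 0 < M) (hq0 : 0 ≤ q) (hq1 : q < 1)
    (hpos : ∀ j, 0 ≤ u j) (hu0 : u 0 = M) (hsum : Summable u)
    (htot : ∑' j, u j = M / (1 - q))
    (hlc : ∀ j, u (j+2) * u j ≤ u (j+1)^2)
    (hz : ∀ j, u j = 0 → u (j+1) = 0) :
    (∀ j, u j ≤ M * q ^ j / (1-q)) ∧
    (∑' j : ℕ, ((j:ℝ))^2 * u j ≤ (2*M*q/(1-q)) * (q/(1-q)^2) + (M*q/(1-q)) * (1-q)⁻¹) ∧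
    (∑' j : ℕ, ((j:ℝ)^2+(j:ℝ)) * u j
      ≤ (2*M*q/(1-q)) * (q/(1-q)^2) + (2*M*q/(1-q)) * (1-q)⁻¹) := by
  have h1q : (0:ℝ) < 1 - q := by linarith
  have hT := tail_le hM hq0 hq1 hpos hu0 hsum htot hlc hz
  have hnormq : ‖q‖ < 1 := by
    rw [Real.norm_eq_abs, abs_of_nonneg hq0]
    exact hq1
  have hgsum : Summable (fun i : ℕ => q ^ i) := summable_geometric_of_lt_one hq0 hq1
  have hgsum1 : Summable (fun i : ℕ => (i:ℝ) * q ^ i) := by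
    have := summable_pow_mul_geometric_of_norm_lt_one 1 hnormq (R := ℝ)
    simpa using this
  have htg : ∑' i : ℕ, q ^ i = (1-q)⁻¹ := tsum_geometric_of_lt_one hq0 hq1
  have htg1 : ∑' i : ℕ, (i:ℝ) * q ^ i = q / (1-q)^2 :=
    tsum_coe_mul_geometric_of_norm_lt_one hnormq
  have hpt : ∀ j, u j ≤ M * q ^ j / (1-q) := by
    intro j
    refine le_trans ?_ (hT j)
    have hsum1 : Summable (fun i => u (i + j)) := (summable_nat_add_iff j).2 hsum
    have := Summable.le_tsum hsum1 0 (fun i _ => hpos _)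
    simpa using this
  refine ⟨hpt, ?_, ?_⟩
  · -- w j = j^2
    have hfeq : (fun i : ℕ => (((i:ℕ)+1:ℝ)^2 - (i:ℝ)^2) * (M * q ^ (i+1) / (1-q)))
        = fun i : ℕ => (2*M*q/(1-q)) * ((i:ℝ) * q ^ i) + (M*q/(1-q)) * q ^ i := by
      funext i
      rw [pow_succ]
      push_cast
      ring
    have hBsum : Summable (fun i : ℕ =>
        ((((i:ℕ)+1:ℝ))^2 - (i:ℝ)^2) * (M * q ^ (i+1) / (1-q))) := by
      rw [hfeq]
      exact (hgsum1.mul_left _).add (hgsum.mul_left _)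
    have hw := weighted_bound (w := fun j : ℕ => ((j:ℝ))^2)
      (B := fun j => M * q ^ j / (1-q)) hsum hpos (by norm_num)
      (fun j => by push_cast; nlinarith [Nat.cast_nonneg (α := ℝ) j])
      hT (fun j => by positivity) (by push_cast at hBsum ⊢; exact hBsum)
    calc ∑' j : ℕ, ((j:ℝ))^2 * u j
        ≤ ∑' i : ℕ, ((((i:ℕ)+1:ℝ))^2 - (i:ℝ)^2) * (M * q ^ (i+1) / (1-q)) := by
          push_cast at hw ⊢
          exact hw
      _ = (2*M*q/(1-q)) * (q/(1-q)^2) + (M*q/(1-q)) * (1-q)⁻¹ := by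
          rw [hfeq, Summable.tsum_add (hgsum1.mul_left _) (hgsum.mul_left _),
            tsum_mul_left, tsum_mul_left, htg, htg1]
  · -- w j = j^2 + j
    have hfeq : (fun i : ℕ => ((((i:ℕ)+1:ℝ)^2 + ((i:ℕ)+1:ℝ)) - ((i:ℝ)^2 + (i:ℝ)))
          * (M * q ^ (i+1) / (1-q)))
        = fun i : ℕ => (2*M*q/(1-q)) * ((i:ℝ) * q ^ i) + (2*M*q/(1-q)) * q ^ i := by
      funext i
      rw [pow_succ]
      push_cast
      ring
    have hBsum : Summable (fun i : ℕ =>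
        ((((i:ℕ)+1:ℝ)^2 + ((i:ℕ)+1:ℝ)) - ((i:ℝ)^2 + (i:ℝ))) * (M * q ^ (i+1) / (1-q))) := by
      rw [hfeq]
      exact (hgsum1.mul_left _).add (hgsum.mul_left _)
    have hw := weighted_bound (w := fun j : ℕ => ((j:ℝ))^2 + (j:ℝ))
      (B := fun j => M * q ^ j / (1-q)) hsum hpos (by norm_num)
      (fun j => by push_cast; nlinarith [Nat.cast_nonneg (α := ℝ) j])
      hT (fun j => by positivity) (by push_cast at hBsum ⊢; exact hBsum)
    calc ∑' j : ℕ, ((j:ℝ)^2 + (j:ℝ)) * u j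
        ≤ ∑' i : ℕ, ((((i:ℕ)+1:ℝ)^2 + ((i:ℕ)+1:ℝ)) - ((i:ℝ)^2 + (i:ℝ)))
            * (M * q ^ (i+1) / (1-q)) := by
          push_cast at hw ⊢
          exact hw
      _ = (2*M*q/(1-q)) * (q/(1-q)^2) + (2*M*q/(1-q)) * (1-q)⁻¹ := by
          rw [hfeq, Summable.tsum_add (hgsum1.mul_left _) (hgsum.mul_left _),
            tsum_mul_left, tsum_mul_left, htg, htg1]

end SeqMain

section Bridge

variable {Ω : Type*} [MeasureSpace Ω] [IsProbabilityMeasure (ℙ : Measure Ω)]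

private lemma variance_shift (Z : Ω → ℝ) (hZ : Integrable Z ℙ) (a : ℝ) :
    variance (fun ω => Z ω - a) ℙ = variance Z ℙ := by
  have hE : (ℙ : Measure Ω)[fun ω => Z ω - a] = (ℙ : Measure Ω)[Z] - a := by
    rw [integral_sub hZ (integrable_const a), integral_const]
    simp
  have hev : evariance (fun ω => Z ω - a) ℙ = evariance Z ℙ := by
    rw [evariance, evariance]
    apply lintegral_congr
    intro ω
    rw [hE]
    congr 2
    ring
  rw [ProbabilityTheory.variance, ProbabilityTheory.variance, hev]

private lemma variance_le_of_hasSum (X : Ω → ℤ) (hXm : Measurable X)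
    (hL : MemLp (fun ω => (X ω : ℝ)) 2 ℙ) (a S : ℝ)
    (hS : HasSum (fun n : ℤ => (ℙ {ω | X ω = n}).toReal * ((n : ℝ) - a) ^ 2) S) :
    variance (fun ω => (X ω : ℝ)) ℙ ≤ S := by
  have hXR : Measurable (fun ω => (X ω : ℝ)) := measurable_from_top.comp hXm
  have hY : MemLp (fun ω => (X ω : ℝ) - a) 2 ℙ := hL.sub (memLp_const a)
  have hint : Integrable (fun ω => (X ω : ℝ)) ℙ := hL.integrable one_le_two
  have h1 : variance (fun ω => (X ω : ℝ)) ℙ = variance (fun ω => (X ω : ℝ) - a) ℙ :=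
    (variance_shift _ hint a).symm
  have h2 : variance (fun ω => (X ω : ℝ) - a) ℙ
      ≤ ∫ ω, ((X ω : ℝ) - a) ^ 2 ∂ℙ := by
    have := variance_le_expectation_sq (μ := (ℙ : Measure Ω))
      (X := fun ω => (X ω : ℝ) - a) ((hXR.sub measurable_const).aestronglyMeasurable)
    exact this
  -- compute the integral as a sum
  have hg : Measurable (fun n : ℤ => ((n : ℝ) - a) ^ 2) := measurable_from_top
  have hintY2 : Integrable (fun ω => ((X ω : ℝ) - a) ^ 2) ℙ := by
    have := hY.integrable_sq
    simpa using this
  have hmap : ∀ n : ℤ, Measure.map X ℙ {n} = ℙ {ω | X ω = n} := by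
    intro n
    rw [Measure.map_apply hXm (measurableSet_singleton n)]
    rfl
  have hintg : Integrable (fun n : ℤ => ((n : ℝ) - a) ^ 2) (Measure.map X ℙ) := by
    rw [integrable_map_measure hg.aestronglyMeasurable hXm.aemeasurable]
    exact hintY2
  have h3 : ∫ ω, ((X ω : ℝ) - a) ^ 2 ∂ℙ
      = ∑' n : ℤ, (ℙ {ω | X ω = n}).toReal * ((n : ℝ) - a) ^ 2 := by
    rw [← integral_map hXm.aemeasurable hg.aestronglyMeasurable,
      integral_countable' hintg]
    apply tsum_congr
    intro n
    rw [measureReal_def, hmap n]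
    simp [smul_eq_mul]
  rw [h1]
  calc variance (fun ω => (X ω : ℝ) - a) ℙ ≤ ∫ ω, ((X ω : ℝ) - a) ^ 2 ∂ℙ := h2
    _ = S := by rw [h3, hS.tsum_eq]

end Bridge

section Cases

variable {Ω : Type*} [MeasureSpace Ω] [IsProbabilityMeasure (ℙ : Measure Ω)]

set_option maxHeartbeats 1000000 in
private lemma caseInt (X : Ω → ℤ) (hXm : Measurable X)
    (hlc : ∀ n : ℤ,
      (ℙ {ω | X ω = n - 1}).toReal * (ℙ {ω | X ω = n + 1}).toReal ≤
        (ℙ {ω | X ω = n}).toReal ^ 2)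
    (hsupp : ∀ i j k : ℤ, i ≤ k → k ≤ j →
      0 < (ℙ {ω | X ω = i}).toReal → 0 < (ℙ {ω | X ω = j}).toReal →
      0 < (ℙ {ω | X ω = k}).toReal)
    (m : ℤ)
    (psymm : ∀ t : ℤ, ℙ {ω | X ω = m + t} = ℙ {ω | X ω = m - t})
    (hL : MemLp (fun ω => (X ω : ℝ)) 2 ℙ)
    (hp_sum : Summable (fun n : ℤ => (ℙ {ω | X ω = n}).toReal))
    (hp_tot : ∑' n : ℤ, (ℙ {ω | X ω = n}).toReal = 1)
    (hex : ∃ n : ℤ, 0 < (ℙ {ω | X ω = n}).toReal) :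
    (∀ n : ℤ, (ℙ {ω | X ω = n}).toReal ≤ (ℙ {ω | X ω = m}).toReal) ∧
    2 * variance (fun ω => (X ω : ℝ)) ℙ
      ≤ (((ℙ {ω | X ω = m}).toReal) ^ 2)⁻¹ - 1 := by
  set p : ℤ → ℝ := fun n => (ℙ {ω | X ω = n}).toReal with hp_def
  have hp_nonneg : ∀ n, 0 ≤ p n := fun n => ENNReal.toReal_nonneg
  have hp_le_one : ∀ n, p n ≤ 1 := fun n => by
    have h := prob_le_one (μ := (ℙ : Measure Ω)) (s := {ω | X ω = n})
    have := ENNReal.toReal_mono (by simp) h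
    simpa using this
  have psymm_p : ∀ t : ℤ, p (m + t) = p (m - t) := fun t => by
    simp only [hp_def, psymm t]
  set u : ℕ → ℝ := fun j => p (m + (j : ℤ)) with hu_def
  have hu0 : u 0 = p m := by simp [hu_def]
  -- positivity of the central value
  have hM : 0 < p m := by
    obtain ⟨n, hn⟩ := hex
    rcases le_or_gt m n with h | h
    · have h1 : 0 < p (m + (n - m)) := by
        rw [show m + (n - m) = n by ring]
        exact hn
      have h2 : 0 < p (m - (n - m)) := by rw [← psymm_p]; exact h1
      exact hsupp (m - (n - m)) (m + (n - m)) m (by linarith) (by linarith) h2 h1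
    · have h1 : 0 < p (m - (m - n)) := by
        rw [show m - (m - n) = n by ring]
        exact hn
      have h2 : 0 < p (m + (m - n)) := by rw [psymm_p]; exact h1
      exact hsupp (m - (m - n)) (m + (m - n)) m (by linarith) (by linarith) h1 h2
  set M : ℝ := p m with hM_def
  have hM1 : M ≤ 1 := hp_le_one m
  set q : ℝ := (1 - M) / (1 + M) with hq_def
  have h1M : (0:ℝ) < 1 + M := by linarith
  have hq0 : 0 ≤ q := div_nonneg (by linarith) (by linarith)
  have hq1 : q < 1 := by
    rw [hq_def, div_lt_one h1M]
    linarith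
  have h1q : 1 - q = 2 * M / (1 + M) := by
    rw [hq_def]
    field_simp
    ring
  -- log-concavity for u
  have key : ∀ n : ℤ, p (n + 1) * p (n - 1) ≤ p n ^ 2 := fun n => by
    rw [mul_comm]; exact hlc n
  have hlcu : ∀ j : ℕ, u (j+2) * u j ≤ u (j+1) ^ 2 := by
    intro j
    have e1 : m + ((j+2:ℕ):ℤ) = (m + ((j+1:ℕ):ℤ)) + 1 := by push_cast; ring
    have e2 : m + ((j:ℕ):ℤ) = (m + ((j+1:ℕ):ℤ)) - 1 := by push_cast; ring
    show p (m + ((j+2:ℕ) : ℤ)) * p (m + ((j:ℕ) : ℤ)) ≤ p (m + ((j+1:ℕ) : ℤ)) ^ 2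
    rw [e1, e2]
    exact key (m + ((j+1:ℕ):ℤ))
  have hz : ∀ j : ℕ, u j = 0 → u (j+1) = 0 := by
    intro j h0
    by_contra h1
    have hpos1 : 0 < u (j+1) := lt_of_le_of_ne (hp_nonneg _) (Ne.symm h1)
    have e3 : m + ((j+1:ℕ):ℤ) = m + ((j:ℤ)+1) := by push_cast; ring
    have hpos1' : 0 < p (m + ((j:ℤ)+1)) := by rw [← e3]; exact hpos1
    have := hsupp m (m + ((j:ℤ)+1)) (m + (j:ℤ))
      (by have : (0:ℤ) ≤ (j:ℤ) := Int.ofNat_nonneg j; linarith)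
      (by linarith) hM hpos1'
    rw [show u j = p (m + (j:ℤ)) from rfl] at h0
    linarith
  have hinj : Function.Injective (fun j : ℕ => m + (j : ℤ)) := by
    intro x y h
    simp only at h
    omega
  have hu_sum : Summable u := hp_sum.comp_injective hinj
  -- total sum
  have htshift : ∑' n : ℤ, p (m + n) = 1 := by
    have := (Equiv.addLeft m).tsum_eq p
    simpa [Equiv.coe_addLeft] using this.trans hp_tot
  have hs1 : Summable (fun j : ℕ => p (m + (j:ℤ))) := hu_sum
  have hs2 : Summable (fun j : ℕ => p (m + (-((j:ℤ) + 1)))) := by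
    apply hp_sum.comp_injective
    intro x y h
    simp only at h
    omega
  have hneg : ∀ j : ℕ, p (m + (-((j:ℤ) + 1))) = u (j+1) := by
    intro j
    have h1 : m + (-((j:ℤ)+1)) = m - ((j:ℤ)+1) := by ring
    rw [h1, ← psymm_p]
    show p (m + ((j:ℤ)+1)) = p (m + ((j+1:ℕ):ℤ))
    have e : m + ((j:ℤ)+1) = m + ((j+1:ℕ):ℤ) := by push_cast; ring
    rw [e]
  have htotu : ∑' j, u j = (1 + M) / 2 := by
    have hsplit := tsum_of_nat_of_neg_add_one (f := fun n : ℤ => p (m + n)) hs1 hs2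
    rw [htshift] at hsplit
    have hnegsum : ∑' j : ℕ, p (m + (-((j:ℤ) + 1))) = ∑' j : ℕ, u (j+1) := by
      exact tsum_congr hneg
    have hzerosplit : ∑' j : ℕ, u j = u 0 + ∑' j : ℕ, u (j+1) := Summable.tsum_eq_zero_add hu_sum
    have : ∑' j : ℕ, p (m + ((j:ℤ))) = ∑' j : ℕ, u j := rfl
    rw [this, hnegsum] at hsplit
    have : ∑' j : ℕ, u (j+1) = ∑' j : ℕ, u j - u 0 := by linarith
    rw [this] at hsplit
    rw [hu0] at hsplit
    linarith
  have htot' : ∑' j, u j = M / (1 - q) := by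
    rw [htotu, h1q]
    rw [div_div_eq_mul_div]
    field_simp
  obtain ⟨hpt, hW, -⟩ := seq_main u M q hM hq0 hq1 (fun j => hp_nonneg _) hu0 hu_sum htot' hlcu hz
  -- u is nonincreasing
  have hdec : ∀ j : ℕ, u (j+1) ≤ u j := by
    intro j
    induction j with
    | zero =>
      have h := key m
      have e1 : p (m - 1) = p (m + 1) := (psymm_p 1).symm
      rw [e1] at h
      have eu : u 1 = p (m + 1) := by
        show p (m + ((1:ℕ):ℤ)) = p (m + 1)
        norm_num
      have h2 : u 1 * u 1 ≤ u 0 * u 0 := by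
        rw [eu, hu0, hM_def]
        nlinarith [h]
      nlinarith [hp_nonneg (m + ((1:ℕ):ℤ)), hp_nonneg m, h2]
    | succ j ih =>
      by_cases h0 : u (j+1) = 0
      · rw [hz (j+1) h0, h0]
      · have hj1 : 0 < u (j+1) := lt_of_le_of_ne (hp_nonneg _) (Ne.symm h0)
        have hj : 0 < u j := by
          by_contra hc
          have : u j = 0 := le_antisymm (not_lt.1 hc) (hp_nonneg _)
          exact h0 (hz j this)
        have h3 := hlcu j
        nlinarith [mul_le_mul_of_nonneg_left ih (le_of_lt hj1)]
  have hmono : ∀ j : ℕ, u j ≤ u 0 := by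
    intro j
    induction j with
    | zero => exact le_rfl
    | succ j ih => exact le_trans (hdec j) ih
  have hsup_le : ∀ n : ℤ, p n ≤ M := by
    intro n
    rcases le_or_gt m n with h | h
    · have e : n = m + (((n - m).toNat : ℕ) : ℤ) := by omega
      rw [e]
      exact le_trans (hmono (n-m).toNat) (le_of_eq hu0)
    · have e : n = m - ((((m - n).toNat : ℕ)) : ℤ) := by omega
      rw [e, ← psymm_p]
      exact le_trans (hmono (m-n).toNat) (le_of_eq hu0)
  -- variance computation
  set G : ℕ → ℝ := fun j => ((j:ℝ))^2 * u j with hG_def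
  set F : ℤ → ℝ := fun n => p n * ((n:ℝ) - (m:ℝ))^2 with hF_def
  have hnormq : ‖q‖ < 1 := by
    rw [Real.norm_eq_abs, abs_of_nonneg hq0]
    exact hq1
  have hgeo2 : Summable (fun j : ℕ => ((j:ℝ))^2 * q ^ j) := by
    simpa using summable_pow_mul_geometric_of_norm_lt_one 2 hnormq (R := ℝ)
  have hFplus_eq : ∀ j : ℕ, F (m + (j:ℤ)) = G j := by
    intro j
    show p (m + (j:ℤ)) * (((m + (j:ℤ) : ℤ):ℝ) - (m:ℝ))^2 = ((j:ℝ))^2 * u j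
    have : u j = p (m + (j:ℤ)) := rfl
    rw [this]
    push_cast
    ring
  have hFneg_eq : ∀ j : ℕ, F (m + (-((j:ℤ)+1))) = G (j+1) := by
    intro j
    show p (m + (-((j:ℤ)+1))) * (((m + (-((j:ℤ)+1)) : ℤ):ℝ) - (m:ℝ))^2
      = (((j+1:ℕ):ℝ))^2 * u (j+1)
    rw [hneg j]
    have e : (((m + (-((j:ℤ)+1)) : ℤ):ℝ) - (m:ℝ))^2 = (((j+1:ℕ):ℝ))^2 := by
      push_cast
      ring
    rw [e]
    ring
  have hGnonneg : ∀ j, 0 ≤ G j := fun j => mul_nonneg (sq_nonneg _) (hp_nonneg _)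
  have hGsum : Summable G := by
    apply Summable.of_nonneg_of_le hGnonneg _ (hgeo2.mul_left (M/(1-q)))
    intro j
    show ((j:ℝ))^2 * u j ≤ M / (1-q) * (((j:ℝ))^2 * q ^ j)
    calc ((j:ℝ))^2 * u j ≤ ((j:ℝ))^2 * (M * q ^ j / (1-q)) :=
          mul_le_mul_of_nonneg_left (hpt j) (sq_nonneg _)
      _ = M / (1-q) * (((j:ℝ))^2 * q ^ j) := by ring
  have hsumplus : Summable (fun j : ℕ => F (m + (j:ℤ))) :=
    hGsum.congr (fun j => (hFplus_eq j).symm)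
  have hsumneg : Summable (fun j : ℕ => F (m + (-((j:ℤ)+1)))) :=
    (((summable_nat_add_iff 1).2 hGsum).congr (fun j => (hFneg_eq j).symm))
  have hhasZ : HasSum (fun n : ℤ => F (m + n))
      ((∑' j : ℕ, F (m + (j:ℤ))) + ∑' j : ℕ, F (m + (-((j:ℤ)+1)))) :=
    HasSum.of_nat_of_neg_add_one hsumplus.hasSum hsumneg.hasSum
  have hhasF : HasSum F ((∑' j : ℕ, F (m + (j:ℤ))) + ∑' j : ℕ, F (m + (-((j:ℤ)+1)))) := by
    refine (Equiv.hasSum_iff (Equiv.addLeft m)).1 ?_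
    simpa [Equiv.coe_addLeft, Function.comp_def] using hhasZ
  have hvar := variance_le_of_hasSum X hXm hL ((m:ℤ):ℝ) _ hhasF
  -- identify the sum
  have hA_eq : ∑' j : ℕ, F (m + (j:ℤ)) = ∑' j, G j := tsum_congr hFplus_eq
  have hB_eq : ∑' j : ℕ, F (m + (-((j:ℤ)+1))) = ∑' j : ℕ, G (j+1) := tsum_congr hFneg_eq
  have hG0 : G 0 = 0 := by
    show ((0:ℕ):ℝ)^2 * u 0 = 0
    norm_num
  have hzg : ∑' j, G j = G 0 + ∑' j : ℕ, G (j+1) := Summable.tsum_eq_zero_add hGsum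
  have hS_eq : (∑' j : ℕ, F (m + (j:ℤ))) + (∑' j : ℕ, F (m + (-((j:ℤ)+1))))
      = 2 * ∑' j, G j := by
    rw [hA_eq, hB_eq]
    rw [hG0] at hzg
    linarith
  have hvar2 : variance (fun ω => (X ω : ℝ)) ℙ ≤ 2 * ∑' j, G j := by
    rw [hS_eq] at hvar
    exact hvar
  have hWG : ∑' j, G j ≤ (2*M*q/(1-q)) * (q/(1-q)^2) + (M*q/(1-q)) * (1-q)⁻¹ := hW
  have halg : 4 * ((2*M*q/(1-q)) * (q/(1-q)^2) + (M*q/(1-q)) * (1-q)⁻¹) = (M^2)⁻¹ - 1 := by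
    have hMne : M ≠ 0 := ne_of_gt hM
    have h1Mne : (1:ℝ)+M ≠ 0 := ne_of_gt h1M
    have e1 : 2*M*q/(1-q) = 1-M := by
      rw [hq_def, h1q]
      field_simp
    have e2 : M*q/(1-q) = (1-M)/2 := by
      rw [hq_def, h1q]
      field_simp
    have e3 : q/(1-q)^2 = (1-M)*(1+M)/(4*M^2) := by
      rw [hq_def, h1q]
      field_simp
      ring
    have e4 : (1-q)⁻¹ = (1+M)/(2*M) := by
      rw [h1q, inv_div]
    rw [e1, e2, e3, e4]
    field_simp
    ring
  refine ⟨hsup_le, ?_⟩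
  show 2 * variance (fun ω => (X ω : ℝ)) ℙ ≤ (M^2)⁻¹ - 1
  linarith

set_option maxHeartbeats 1000000 in
private lemma caseHalf (X : Ω → ℤ) (hXm : Measurable X)
    (hlc : ∀ n : ℤ,
      (ℙ {ω | X ω = n - 1}).toReal * (ℙ {ω | X ω = n + 1}).toReal ≤
        (ℙ {ω | X ω = n}).toReal ^ 2)
    (hsupp : ∀ i j k : ℤ, i ≤ k → k ≤ j →
      0 < (ℙ {ω | X ω = i}).toReal → 0 < (ℙ {ω | X ω = j}).toReal →
      0 < (ℙ {ω | X ω = k}).toReal)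
    (m : ℤ)
    (psymm : ∀ t : ℤ, ℙ {ω | X ω = m + 1 + t} = ℙ {ω | X ω = m - t})
    (hL : MemLp (fun ω => (X ω : ℝ)) 2 ℙ)
    (hp_sum : Summable (fun n : ℤ => (ℙ {ω | X ω = n}).toReal))
    (hp_tot : ∑' n : ℤ, (ℙ {ω | X ω = n}).toReal = 1)
    (hex : ∃ n : ℤ, 0 < (ℙ {ω | X ω = n}).toReal) :
    (∀ n : ℤ, (ℙ {ω | X ω = n}).toReal ≤ (ℙ {ω | X ω = m + 1}).toReal) ∧
    2 * variance (fun ω => (X ω : ℝ)) ℙ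
      ≤ (((ℙ {ω | X ω = m + 1}).toReal) ^ 2)⁻¹ - 1 := by
  set p : ℤ → ℝ := fun n => (ℙ {ω | X ω = n}).toReal with hp_def
  have hp_nonneg : ∀ n, 0 ≤ p n := fun n => ENNReal.toReal_nonneg
  have psymm_p : ∀ t : ℤ, p (m + 1 + t) = p (m - t) := fun t => by
    simp only [hp_def, psymm t]
  set u : ℕ → ℝ := fun j => p (m + 1 + (j : ℤ)) with hu_def
  have hu0 : u 0 = p (m + 1) := by simp [hu_def]
  have hM : 0 < p (m + 1) := by
    obtain ⟨n, hn⟩ := hex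
    rcases le_or_gt (m + 1) n with h | h
    · have h1 : 0 < p (m + 1 + (n - (m+1))) := by
        rw [show m + 1 + (n - (m+1)) = n by ring]
        exact hn
      have h2 : 0 < p (m - (n - (m+1))) := by rw [← psymm_p]; exact h1
      exact hsupp (m - (n - (m+1))) (m + 1 + (n - (m+1))) (m+1)
        (by linarith) (by linarith) h2 h1
    · have h1 : 0 < p (m - (m - n)) := by
        rw [show m - (m - n) = n by ring]
        exact hn
      have h2 : 0 < p (m + 1 + (m - n)) := by rw [psymm_p]; exact h1
      exact hsupp (m - (m - n)) (m + 1 + (m - n)) (m+1)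
        (by linarith) (by linarith) h1 h2
  set M : ℝ := p (m + 1) with hM_def
  -- log-concavity for u
  have key : ∀ n : ℤ, p (n + 1) * p (n - 1) ≤ p n ^ 2 := fun n => by
    rw [mul_comm]; exact hlc n
  have hlcu : ∀ j : ℕ, u (j+2) * u j ≤ u (j+1) ^ 2 := by
    intro j
    have e1 : m + 1 + ((j+2:ℕ):ℤ) = (m + 1 + ((j+1:ℕ):ℤ)) + 1 := by push_cast; ring
    have e2 : m + 1 + ((j:ℕ):ℤ) = (m + 1 + ((j+1:ℕ):ℤ)) - 1 := by push_cast; ring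
    show p (m + 1 + ((j+2:ℕ) : ℤ)) * p (m + 1 + ((j:ℕ) : ℤ))
      ≤ p (m + 1 + ((j+1:ℕ) : ℤ)) ^ 2
    rw [e1, e2]
    exact key (m + 1 + ((j+1:ℕ):ℤ))
  have hz : ∀ j : ℕ, u j = 0 → u (j+1) = 0 := by
    intro j h0
    by_contra h1
    have hpos1 : 0 < u (j+1) := lt_of_le_of_ne (hp_nonneg _) (Ne.symm h1)
    have e3 : m + 1 + ((j+1:ℕ):ℤ) = m + 1 + ((j:ℤ)+1) := by push_cast; ring
    have hpos1' : 0 < p (m + 1 + ((j:ℤ)+1)) := by rw [← e3]; exact hpos1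
    have := hsupp (m+1) (m + 1 + ((j:ℤ)+1)) (m + 1 + (j:ℤ))
      (by have : (0:ℤ) ≤ (j:ℤ) := Int.ofNat_nonneg j; linarith)
      (by linarith) hM hpos1'
    rw [show u j = p (m + 1 + (j:ℤ)) from rfl] at h0
    linarith
  have hinj : Function.Injective (fun j : ℕ => m + 1 + (j : ℤ)) := by
    intro x y h
    simp only at h
    omega
  have hu_sum : Summable u := hp_sum.comp_injective hinj
  -- total sum
  have htshift : ∑' n : ℤ, p (m + 1 + n) = 1 := by
    have h := (Equiv.addLeft (m+1)).tsum_eq p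
    simp only [Equiv.coe_addLeft] at h
    rw [hp_tot] at h
    exact h
  have hs1 : Summable (fun j : ℕ => p (m + 1 + (j:ℤ))) := hu_sum
  have hs2 : Summable (fun j : ℕ => p (m + 1 + (-((j:ℤ) + 1)))) := by
    apply hp_sum.comp_injective
    intro x y h
    simp only at h
    omega
  have hneg : ∀ j : ℕ, p (m + 1 + (-((j:ℤ) + 1))) = u j := by
    intro j
    have h1 : m + 1 + (-((j:ℤ)+1)) = m - (j:ℤ) := by ring
    rw [h1, ← psymm_p]
  have htotu : ∑' j, u j = 1 / 2 := by
    have hsplit := tsum_of_nat_of_neg_add_one (f := fun n : ℤ => p (m + 1 + n)) hs1 hs2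
    rw [htshift] at hsplit
    have hnegsum : ∑' j : ℕ, p (m + 1 + (-((j:ℤ) + 1))) = ∑' j : ℕ, u j :=
      tsum_congr hneg
    have huu : ∑' j : ℕ, p (m + 1 + ((j:ℤ))) = ∑' j : ℕ, u j := rfl
    rw [huu, hnegsum] at hsplit
    linarith
  have hMhalf : M ≤ 1/2 := by
    have h0 := Summable.le_tsum hu_sum 0 (fun i _ => hp_nonneg _)
    rw [htotu] at h0
    rw [← hu0]
    exact h0
  set q : ℝ := 1 - 2*M with hq_def
  have h1q : 1 - q = 2*M := by rw [hq_def]; ring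
  have hq0 : 0 ≤ q := by rw [hq_def]; linarith
  have hq1 : q < 1 := by rw [hq_def]; linarith
  have hMne : M ≠ 0 := ne_of_gt hM
  have htot' : ∑' j, u j = M / (1 - q) := by
    rw [htotu, h1q]
    field_simp
  obtain ⟨hpt, -, hW⟩ := seq_main u M q hM hq0 hq1 (fun j => hp_nonneg _) hu0 hu_sum htot' hlcu hz
  -- u is nonincreasing
  have hdec : ∀ j : ℕ, u (j+1) ≤ u j := by
    intro j
    induction j with
    | zero =>
      have h := key (m+1)
      have e1 : p (m + 1 - 1) = p (m + 1) := by
        have := psymm_p 0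
        rw [show m + 1 + (0:ℤ) = m + 1 by ring, show m - (0:ℤ) = m + 1 - 1 by ring] at this
        exact this.symm
      rw [e1] at h
      have eu : u 1 = p (m + 1 + 1) := by
        show p (m + 1 + ((1:ℕ):ℤ)) = p (m + 1 + 1)
        norm_num
      have h2 : u 1 * u 0 ≤ u 0 * u 0 := by
        rw [eu, hu0]
        nlinarith [h]
      have hu0pos : 0 < u 0 := by rw [hu0]; exact hM
      exact le_of_mul_le_mul_right (by linarith [h2]) hu0pos
    | succ j ih =>
      by_cases h0 : u (j+1) = 0
      · rw [hz (j+1) h0, h0]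
      · have hj1 : 0 < u (j+1) := lt_of_le_of_ne (hp_nonneg _) (Ne.symm h0)
        have hj : 0 < u j := by
          by_contra hc
          have : u j = 0 := le_antisymm (not_lt.1 hc) (hp_nonneg _)
          exact h0 (hz j this)
        have h3 := hlcu j
        nlinarith [mul_le_mul_of_nonneg_left ih (le_of_lt hj1)]
  have hmono : ∀ j : ℕ, u j ≤ u 0 := by
    intro j
    induction j with
    | zero => exact le_rfl
    | succ j ih => exact le_trans (hdec j) ih
  have hsup_le : ∀ n : ℤ, p n ≤ M := by
    intro n
    rcases le_or_gt (m+1) n with h | h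
    · have e : n = m + 1 + (((n - (m+1)).toNat : ℕ) : ℤ) := by omega
      rw [e]
      exact le_trans (hmono (n-(m+1)).toNat) (le_of_eq hu0)
    · have e : n = m - ((((m - n).toNat : ℕ)) : ℤ) := by omega
      rw [e, ← psymm_p]
      exact le_trans (hmono (m-n).toNat) (le_of_eq hu0)
  -- variance computation
  set G : ℕ → ℝ := fun j => ((j:ℝ) + 1/2)^2 * u j with hG_def
  set F : ℤ → ℝ := fun n => p n * ((n:ℝ) - ((m:ℝ) + 1/2))^2 with hF_def
  have hnormq : ‖q‖ < 1 := by
    rw [Real.norm_eq_abs, abs_of_nonneg hq0]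
    exact hq1
  have hgeo2 : Summable (fun j : ℕ => ((j:ℝ))^2 * q ^ j) := by
    simpa using summable_pow_mul_geometric_of_norm_lt_one 2 hnormq (R := ℝ)
  have hFplus_eq : ∀ j : ℕ, F (m + 1 + (j:ℤ)) = G j := by
    intro j
    show p (m + 1 + (j:ℤ)) * (((m + 1 + (j:ℤ) : ℤ):ℝ) - ((m:ℝ) + 1/2))^2
      = ((j:ℝ) + 1/2)^2 * u j
    have : u j = p (m + 1 + (j:ℤ)) := rfl
    rw [this]
    push_cast
    ring
  have hFneg_eq : ∀ j : ℕ, F (m + 1 + (-((j:ℤ)+1))) = G j := by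
    intro j
    show p (m + 1 + (-((j:ℤ)+1))) * (((m + 1 + (-((j:ℤ)+1)) : ℤ):ℝ) - ((m:ℝ) + 1/2))^2
      = ((j:ℝ) + 1/2)^2 * u j
    rw [hneg j]
    have e : (((m + 1 + (-((j:ℤ)+1)) : ℤ):ℝ) - ((m:ℝ) + 1/2))^2 = ((j:ℝ) + 1/2)^2 := by
      push_cast
      ring
    rw [e]
    ring
  have hGnonneg : ∀ j, 0 ≤ G j := fun j => mul_nonneg (sq_nonneg _) (hp_nonneg _)
  set G1 : ℕ → ℝ := fun j => ((j:ℝ)^2 + (j:ℝ)) * u j with hG1_def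
  have hG1sum : Summable G1 := by
    apply Summable.of_nonneg_of_le
      (fun j => mul_nonneg (by positivity) (hp_nonneg _)) _
      (hgeo2.mul_left (2 * (M/(1-q))))
    intro j
    show ((j:ℝ)^2 + (j:ℝ)) * u j ≤ 2 * (M / (1-q)) * (((j:ℝ))^2 * q ^ j)
    have hjj : (j:ℝ) ≤ (j:ℝ)^2 := by
      rcases Nat.eq_zero_or_pos j with h | h
      · simp [h]
      · have h1 : (1:ℝ) ≤ (j:ℝ) := by exact_mod_cast h
        nlinarith
    calc ((j:ℝ)^2 + (j:ℝ)) * u j ≤ (2 * ((j:ℝ))^2) * u j := by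
          apply mul_le_mul_of_nonneg_right _ (hp_nonneg _)
          linarith
      _ ≤ (2 * ((j:ℝ))^2) * (M * q ^ j / (1-q)) := by
          apply mul_le_mul_of_nonneg_left (hpt j) (by positivity)
      _ = 2 * (M / (1-q)) * (((j:ℝ))^2 * q ^ j) := by ring
  have hGsplit : ∀ j, G j = G1 j + (1/4) * u j := by
    intro j
    show ((j:ℝ) + 1/2)^2 * u j = ((j:ℝ)^2 + (j:ℝ)) * u j + (1/4) * u j
    ring
  have hGsum : Summable G :=
    (hG1sum.add (hu_sum.mul_left (1/4))).congr (fun j => (hGsplit j).symm)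
  have hsumplus : Summable (fun j : ℕ => F (m + 1 + (j:ℤ))) :=
    hGsum.congr (fun j => (hFplus_eq j).symm)
  have hsumneg : Summable (fun j : ℕ => F (m + 1 + (-((j:ℤ)+1)))) :=
    hGsum.congr (fun j => (hFneg_eq j).symm)
  have hhasZ : HasSum (fun n : ℤ => F (m + 1 + n))
      ((∑' j : ℕ, F (m + 1 + (j:ℤ))) + ∑' j : ℕ, F (m + 1 + (-((j:ℤ)+1)))) :=
    HasSum.of_nat_of_neg_add_one hsumplus.hasSum hsumneg.hasSum
  have hhasF : HasSum F
      ((∑' j : ℕ, F (m + 1 + (j:ℤ))) + ∑' j : ℕ, F (m + 1 + (-((j:ℤ)+1)))) := by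
    refine (Equiv.hasSum_iff (Equiv.addLeft (m+1))).1 ?_
    simpa [Equiv.coe_addLeft, Function.comp_def, add_assoc] using hhasZ
  have hvar := variance_le_of_hasSum X hXm hL ((m:ℝ) + 1/2) _ hhasF
  have hA_eq : ∑' j : ℕ, F (m + 1 + (j:ℤ)) = ∑' j, G j := tsum_congr hFplus_eq
  have hB_eq : ∑' j : ℕ, F (m + 1 + (-((j:ℤ)+1))) = ∑' j, G j := tsum_congr hFneg_eq
  have hGtot : ∑' j, G j = (∑' j, G1 j) + 1/8 := by
    calc ∑' j, G j = ∑' j, (G1 j + (1/4) * u j) := tsum_congr hGsplit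
      _ = (∑' j, G1 j) + ∑' j, (1/4) * u j :=
          Summable.tsum_add hG1sum (hu_sum.mul_left (1/4))
      _ = (∑' j, G1 j) + (1/4) * ∑' j, u j := by rw [tsum_mul_left]
      _ = (∑' j, G1 j) + 1/8 := by rw [htotu]; ring
  have hvar2 : variance (fun ω => (X ω : ℝ)) ℙ ≤ 2 * ((∑' j, G1 j) + 1/8) := by
    rw [hA_eq, hB_eq, hGtot] at hvar
    linarith
  have hWG : ∑' j, G1 j ≤ (2*M*q/(1-q)) * (q/(1-q)^2) + (2*M*q/(1-q)) * (1-q)⁻¹ := hW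
  have halg : 4 * ((2*M*q/(1-q)) * (q/(1-q)^2) + (2*M*q/(1-q)) * (1-q)⁻¹)
      = (M^2)⁻¹ - 2/M := by
    have e1 : 2*M*q/(1-q) = q := by
      rw [h1q]
      field_simp
    have e3 : q/(1-q)^2 = q/(4*M^2) := by
      rw [h1q]
      congr 1
      ring
    have e4 : (1-q)⁻¹ = (2*M)⁻¹ := by rw [h1q]
    rw [e1, e3, e4, hq_def]
    field_simp
    ring
  have h2M : (3:ℝ)/2 ≤ 2/M := by
    rw [div_le_div_iff₀ (by norm_num) hM]
    linarith
  refine ⟨hsup_le, ?_⟩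
  show 2 * variance (fun ω => (X ω : ℝ)) ℙ ≤ (M^2)⁻¹ - 1
  linarith

end Cases

/-- `Δ_∞(X) = (sup_{n∈ℤ} P(X=n))⁻² − 1` for an integer-valued random variable. -/
noncomputable def DeltaInf {Ω : Type*} [MeasureSpace Ω] (X : Ω → ℤ) : ℝ :=
  ((⨆ n : ℤ, (ℙ {ω | X ω = n}).toReal) ^ 2)⁻¹ - 1

set_option maxHeartbeats 1000000 in
/-- If `X` is an integer-valued random variable which is symmetric
(about some point `a ∈ ℝ`) and log-concave (its probability mass function `f`
satisfies `f(n)² ≥ f(n−1)f(n+1)` and has interval support), then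
`Δ_∞(X) ≥ 2·Var(X)`. -/
theorem deltaInf_symmetric_logConcave
    {Ω : Type*} [MeasureSpace Ω] [IsProbabilityMeasure (ℙ : Measure Ω)]
    (X : Ω → ℤ) (hXm : Measurable X)
    (hsymm : ∃ a : ℝ, ∀ x : ℝ,
      ℙ {ω | (X ω : ℝ) = a + x} = ℙ {ω | (X ω : ℝ) = a - x})
    (hlc : ∀ n : ℤ,
      (ℙ {ω | X ω = n - 1}).toReal * (ℙ {ω | X ω = n + 1}).toReal ≤
        (ℙ {ω | X ω = n}).toReal ^ 2)
    (hsupp : ∀ i j k : ℤ, i ≤ k → k ≤ j →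
      0 < (ℙ {ω | X ω = i}).toReal → 0 < (ℙ {ω | X ω = j}).toReal →
      0 < (ℙ {ω | X ω = k}).toReal) :
    2 * variance (fun ω => (X ω : ℝ)) ℙ ≤ DeltaInf X := by
  classical
  obtain ⟨a, ha⟩ := hsymm
  set p : ℤ → ℝ := fun n => (ℙ {ω | X ω = n}).toReal with hp_def
  have hmeas_n : ∀ n : ℤ, MeasurableSet {ω | X ω = n} := fun n =>
    hXm (measurableSet_singleton n)
  have hPtot : ∑' n : ℤ, ℙ {ω | X ω = n} = 1 := by
    have hcov : (⋃ n : ℤ, {ω | X ω = n}) = Set.univ := by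
      ext ω
      simp only [Set.mem_iUnion, Set.mem_setOf_eq, Set.mem_univ, iff_true]
      exact ⟨X ω, rfl⟩
    have hdisj : Pairwise (Function.onFun Disjoint (fun n : ℤ => {ω | X ω = n})) := by
      intro i j hij
      simp only [Function.onFun, Set.disjoint_left, Set.mem_setOf_eq]
      intro ω h1 h2
      exact hij (h1 ▸ h2 ▸ rfl)
    rw [← measure_iUnion hdisj hmeas_n, hcov]
    exact measure_univ
  have hp_nonneg : ∀ n, 0 ≤ p n := fun n => ENNReal.toReal_nonneg
  have hp_le_one : ∀ n, p n ≤ 1 := fun n => by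
    have h := prob_le_one (μ := (ℙ : Measure Ω)) (s := {ω | X ω = n})
    have := ENNReal.toReal_mono (by simp) h
    simpa using this
  have hp_sum : Summable p :=
    ENNReal.summable_toReal (by rw [hPtot]; exact ENNReal.one_ne_top)
  have hp_tot : ∑' n, p n = 1 := by
    rw [hp_def]
    rw [← ENNReal.tsum_toReal_eq (fun n => measure_ne_top _ _), hPtot, ENNReal.toReal_one]
  have hbdd : BddAbove (Set.range p) := ⟨1, by rintro x ⟨n, rfl⟩; exact hp_le_one n⟩
  have hex : ∃ n, 0 < p n := by
    by_contra h
    push_neg at h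
    have hz : ∀ n, p n = 0 := fun n => le_antisymm (h n) (hp_nonneg n)
    have : (1:ℝ) = 0 := by
      rw [← hp_tot, tsum_congr hz, tsum_zero]
    norm_num at this
  by_cases hL : MemLp (fun ω => (X ω : ℝ)) 2 ℙ
  swap
  · -- not square integrable: variance is zero
    have hXR : AEStronglyMeasurable (fun ω => (X ω : ℝ)) ℙ :=
      (measurable_from_top.comp hXm).aestronglyMeasurable
    have hvar : variance (fun ω => (X ω : ℝ)) ℙ = 0 := by
      rw [ProbabilityTheory.variance, evariance_eq_top hXR hL]
      simp
    rw [hvar, DeltaInf]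
    obtain ⟨n0, hn0⟩ := hex
    have hs_pos : 0 < ⨆ n, p n := lt_of_lt_of_le hn0 (le_ciSup hbdd n0)
    have hs_le : (⨆ n, p n) ≤ 1 := ciSup_le hp_le_one
    have hsq : (⨆ n, p n)^2 ≤ 1 := by nlinarith
    have hsqpos : 0 < (⨆ n, p n)^2 := by positivity
    have h2 : (1:ℝ) ≤ ((⨆ n, p n)^2)⁻¹ := (one_le_inv_iff₀.mpr ⟨hsqpos, hsq⟩)
    linarith
  · -- main case: find the half-integer center
    have hhalf : ∃ c : ℤ, (c : ℝ) = 2 * a := by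
      by_contra hc
      push_neg at hc
      have hzero : ∀ n : ℤ, ℙ {ω | X ω = n} = 0 := by
        intro n
        have h1 := ha ((n : ℝ) - a)
        have e1 : {ω | (X ω : ℝ) = a + ((n:ℝ) - a)} = {ω | X ω = n} := by
          ext ω
          simp only [Set.mem_setOf_eq]
          rw [show a + ((n:ℝ) - a) = (n:ℝ) by ring]
          exact_mod_cast Int.cast_inj (α := ℝ)
        have e2 : {ω | (X ω : ℝ) = a - ((n:ℝ) - a)} = (∅ : Set Ω) := by
          ext ω
          simp only [Set.mem_setOf_eq, Set.mem_empty_iff_false, iff_false]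
          intro h'
          apply hc (X ω + n)
          push_cast
          linarith
        rw [e1, e2] at h1
        rw [h1]
        exact measure_empty
      have : (1:ENNReal) = 0 := by
        rw [← hPtot, tsum_congr hzero, tsum_zero]
      norm_num at this
    obtain ⟨c, hc⟩ := hhalf
    rcases Int.even_or_odd c with ⟨m, hm⟩ | ⟨m, hm⟩
    · -- a = m, integer center
      have haa : a = (m:ℝ) := by
        rw [hm] at hc
        push_cast at hc
        linarith
      have psymm : ∀ t : ℤ, ℙ {ω | X ω = m + t} = ℙ {ω | X ω = m - t} := by
        intro t
        have h := ha (t : ℝ)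
        have e1 : {ω | (X ω : ℝ) = a + (t:ℝ)} = {ω | X ω = m + t} := by
          ext ω
          simp only [Set.mem_setOf_eq, haa]
          rw [show (m:ℝ) + (t:ℝ) = ((m + t : ℤ) : ℝ) by push_cast; ring]
          exact_mod_cast Int.cast_inj (α := ℝ)
        have e2 : {ω | (X ω : ℝ) = a - (t:ℝ)} = {ω | X ω = m - t} := by
          ext ω
          simp only [Set.mem_setOf_eq, haa]
          rw [show (m:ℝ) - (t:ℝ) = ((m - t : ℤ) : ℝ) by push_cast; ring]
          exact_mod_cast Int.cast_inj (α := ℝ)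
        rw [e1, e2] at h
        exact h
      have hmain := caseInt X hXm hlc hsupp m psymm hL hp_sum hp_tot hex
      have hsup : (⨆ n : ℤ, p n) = p m :=
        le_antisymm (ciSup_le hmain.1) (le_ciSup hbdd m)
      rw [DeltaInf, hsup]
      exact hmain.2
    · -- a = m + 1/2, half-integer center
      have haa : a = (m:ℝ) + 1/2 := by
        rw [hm] at hc
        push_cast at hc
        linarith
      have psymm : ∀ t : ℤ, ℙ {ω | X ω = m + 1 + t} = ℙ {ω | X ω = m - t} := by
        intro t
        have h := ha ((t : ℝ) + 1/2)
        have e1 : {ω | (X ω : ℝ) = a + ((t:ℝ) + 1/2)} = {ω | X ω = m + 1 + t} := by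
          ext ω
          simp only [Set.mem_setOf_eq, haa]
          rw [show (m:ℝ) + 1/2 + ((t:ℝ) + 1/2) = ((m + 1 + t : ℤ) : ℝ) by push_cast; ring]
          exact_mod_cast Int.cast_inj (α := ℝ)
        have e2 : {ω | (X ω : ℝ) = a - ((t:ℝ) + 1/2)} = {ω | X ω = m - t} := by
          ext ω
          simp only [Set.mem_setOf_eq, haa]
          rw [show (m:ℝ) + 1/2 - ((t:ℝ) + 1/2) = ((m - t : ℤ) : ℝ) by push_cast; ring]
          exact_mod_cast Int.cast_inj (α := ℝ)
        rw [e1, e2] at h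
        exact h
      have hmain := caseHalf X hXm hlc hsupp m psymm hL hp_sum hp_tot hex
      have hsup : (⨆ n : ℤ, p n) = p (m+1) :=
        le_antisymm (ciSup_le hmain.1) (le_ciSup hbdd (m+1))
      rw [DeltaInf, hsup]
      exact hmain.2
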